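/- For every integer n ≥ 9, the quantity s_n = (∑_{k=1}^{n−2} 1/k) + 13/(12(n−1)) + 5/(12n) − ln n satisfies s_n − γ < 1/(12n³) + 13/(120n⁴). -/

import Mathlib

noncomputable def s (n : ℕ) : ℝ :=
  (∑ k ∈ Finset.Icc 1 (n - 2), (1 : ℝ) / k) + 13 / (12 * ((n : ℝ) - 1)) + 5 / (12 * n)
    - Real.log n

noncomputable def B (n : ℕ) : ℝ := 1 / (12 * (n : ℝ) ^ 3) + 13 / (120 * (n : ℝ) ^ 4)

lemma log_upper (x : ℝ) (hx : 9 ≤ x) :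
    Real.log (1 + 1 / x)
      < -(1 / (12 * (x - 1))) + 2 / (3 * x) + 5 / (12 * (x + 1))
        + (1 / (12 * x ^ 3) + 13 / (120 * x ^ 4))
        - (1 / (12 * (x + 1) ^ 3) + 13 / (120 * (x + 1) ^ 4)) := by
  have hx0 : (0 : ℝ) < x := by linarith
  have hx1 : (0 : ℝ) < x - 1 := by linarith
  have hxp : (0 : ℝ) < x + 1 := by linarith
  have habs : |(-(1 / x) : ℝ)| < 1 := by
    rw [abs_neg, abs_of_pos (by positivity), div_lt_one hx0]; linarith
  have key := Real.abs_log_sub_add_sum_range_le habs 6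
  rw [abs_le] at key
  have h2 := key.2
  have habs' : |(-(1 / x) : ℝ)| = 1 / x := by
    rw [abs_neg, abs_of_pos (by positivity)]
  rw [habs'] at h2
  have hsum : (∑ i ∈ Finset.range 6, (-(1 / x)) ^ (i + 1) / (i + 1))
      = -(1/x) + 1/(2*x^2) - 1/(3*x^3) + 1/(4*x^4) - 1/(5*x^5) + 1/(6*x^6) := by
    simp [Finset.sum_range_succ]
    ring
  have hlog1 : (1 : ℝ) - (-(1 / x)) = 1 + 1 / x := by ring
  rw [hlog1, hsum] at h2
  have h1x : (0 : ℝ) < 1 - 1 / x := by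
    rw [sub_pos, div_lt_one hx0]; linarith
  have hT : Real.log (1 + 1 / x)
      ≤ 1/x - 1/(2*x^2) + 1/(3*x^3) - 1/(4*x^4) + 1/(5*x^5) - 1/(6*x^6)
        + (1/x)^7 / (1 - 1/x) := by linarith
  have hrem : (1/x)^7 / (1 - 1/x) = 1 / (x^6 * (x - 1)) := by
    rw [div_eq_div_iff h1x.ne' (by positivity)]
    field_simp
  rw [hrem] at hT
  refine lt_of_le_of_lt hT ?_
  rw [← sub_pos]
  have hP : -(1 / (12 * (x - 1))) + 2 / (3 * x) + 5 / (12 * (x + 1))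
        + (1 / (12 * x ^ 3) + 13 / (120 * x ^ 4))
        - (1 / (12 * (x + 1) ^ 3) + 13 / (120 * (x + 1) ^ 4))
      - (1/x - 1/(2*x^2) + 1/(3*x^3) - 1/(4*x^4) + 1/(5*x^5) - 1/(6*x^6)
        + 1 / (x^6 * (x - 1)))
      = (8*(x-9)^6 + 386*(x-9)^5 + 7486*(x-9)^4 + 72985*(x-9)^3
          + 358288*(x-9)^2 + 714111*(x-9) + 37336)
        / (120 * x^6 * (x - 1) * (x + 1)^4) := by
    field_simp
    ring
  rw [hP]
  have h9 : (0:ℝ) ≤ x - 9 := by linarith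
  positivity

lemma real_step (x : ℝ) (hx : 9 ≤ x) :
    13/(12*(x-1)) + 5/(12*x) - Real.log x - (1/(12*x^3) + 13/(120*x^4))
      < 1/(x-1) + 13/(12*x) + 5/(12*(x+1)) - Real.log (x+1)
        - (1/(12*(x+1)^3) + 13/(120*(x+1)^4)) := by
  have hx0 : (0 : ℝ) < x := by linarith
  have hx1 : x - 1 ≠ 0 := by intro h; nlinarith [h]
  have hlog' : Real.log (x + 1) = Real.log x + Real.log (1 + 1 / x) := by
    rw [← Real.log_mul (by positivity) (by positivity)]
    congr 1
    field_simp
  rw [hlog']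
  have e1 : 1/(x-1) - 13/(12*(x-1)) = -(1/(12*(x-1))) := by
    field_simp
    ring
  have e2 : 13/(12*x) - 5/(12*x) = 2/(3*x) := by
    field_simp
    ring
  linarith [log_upper x hx, e1, e2]

lemma s_step (k : ℕ) (hk : 9 ≤ k) : s k - B k < s (k + 1) - B (k + 1) := by
  have hx9 : (9 : ℝ) ≤ (k : ℝ) := by exact_mod_cast hk
  have hidx : k + 1 - 2 = (k - 2) + 1 := by omega
  have hsum : (∑ i ∈ Finset.Icc 1 (k + 1 - 2), (1 : ℝ) / i)
      = (∑ i ∈ Finset.Icc 1 (k - 2), (1 : ℝ) / i) + 1 / ((k : ℝ) - 1) := by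
    rw [hidx, Finset.sum_Icc_succ_top (by omega)]
    congr 1
    have h1 : ((k - 2 + 1 : ℕ) : ℝ) = (k : ℝ) - 1 := by
      have h2 : k - 2 + 1 = k - 1 := by omega
      rw [h2]
      push_cast [show 1 ≤ k by omega]
      ring
    rw [h1]
  have hcast1 : ((k + 1 : ℕ) : ℝ) = (k : ℝ) + 1 := by push_cast; ring
  simp only [s, B, hcast1]
  rw [hsum]
  have e1 : (k : ℝ) + 1 - 1 = (k : ℝ) := by ring
  rw [e1]
  linarith [real_step (k : ℝ) hx9]

lemma B_tendsto : Filter.Tendsto B Filter.atTop (nhds 0) := by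
  have h1 : Filter.Tendsto (fun n : ℕ => 1 / (n : ℝ)) Filter.atTop (nhds 0) :=
    tendsto_one_div_atTop_nhds_zero_nat
  have h3 := ((h1.pow 3).const_mul (1/12 : ℝ)).add ((h1.pow 4).const_mul (13/120 : ℝ))
  norm_num at h3
  apply h3.congr'
  filter_upwards [Filter.eventually_ge_atTop 1] with n hn
  have hn0 : (0:ℝ) < (n:ℝ) := by exact_mod_cast hn
  simp only [B]
  field_simp

lemma s_tendsto :
    Filter.Tendsto (fun n => s n - B n) Filter.atTop (nhds Real.eulerMascheroniConstant) := by
  have hmain := Real.tendsto_harmonic_sub_log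
  have hx : Filter.Tendsto (fun n : ℕ => (n : ℝ)) Filter.atTop Filter.atTop :=
    tendsto_natCast_atTop_atTop
  have hm1 : Filter.Tendsto (fun n : ℕ => 12 * ((n : ℝ) - 1)) Filter.atTop Filter.atTop := by
    apply Filter.Tendsto.const_mul_atTop (by norm_num : (0:ℝ) < 12)
    exact Filter.tendsto_atTop_add_const_right _ (-1)
      (by simpa [sub_eq_add_neg] using hx) |>.congr (fun n => by ring)
  have hm2 : Filter.Tendsto (fun n : ℕ => 12 * (n : ℝ)) Filter.atTop Filter.atTop :=
    hx.const_mul_atTop (by norm_num)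
  have hcorr : Filter.Tendsto
      (fun n : ℕ => 1 / (12 * ((n : ℝ) - 1)) - 7 / (12 * (n : ℝ)) - B n)
      Filter.atTop (nhds 0) := by
    have h1 := hm1.inv_tendsto_atTop.const_mul (1:ℝ)
    have h2 := hm2.inv_tendsto_atTop.const_mul (7:ℝ)
    have h := (h1.sub h2).sub B_tendsto
    norm_num at h
    exact h.congr (fun n => by simp [div_eq_mul_inv])
  have hfin := hmain.add hcorr
  rw [add_zero] at hfin
  apply hfin.congr'
  filter_upwards [Filter.eventually_ge_atTop 2] with n hn
  obtain ⟨m, rfl⟩ : ∃ m, n = m + 2 := ⟨n - 2, by omega⟩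
  have hsum : (harmonic (m + 2) : ℝ) = (∑ i ∈ Finset.Icc 1 m, (1 : ℝ) / i)
      + 1 / ((m : ℝ) + 1) + 1 / ((m : ℝ) + 2) := by
    rw [harmonic_succ, harmonic_succ, harmonic_eq_sum_Icc]
    push_cast
    simp only [one_div]
    ring
  have e2 : m + 2 - 2 = m := by omega
  simp only [s, e2]
  rw [hsum]
  have hm1p : (0:ℝ) < (m : ℝ) + 1 := by positivity
  have hm2p : (0:ℝ) < (m : ℝ) + 2 := by positivity
  push_cast
  have e3 : (m : ℝ) + 2 - 1 = (m : ℝ) + 1 := by ring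
  rw [e3]
  field_simp
  ring

theorem upper_bound (n : ℕ) (hn : 9 ≤ n) :
    s n - Real.eulerMascheroniConstant
      < 1 / (12 * (n : ℝ) ^ 3) + 13 / (120 * (n : ℝ) ^ 4) := by
  have mono : ∀ a b : ℕ, 9 ≤ a → a ≤ b → s a - B a ≤ s b - B b := by
    intro a b ha hab
    induction b, hab using Nat.le_induction with
    | base => exact le_refl _
    | succ b hb ih => exact le_trans ih (le_of_lt (s_step b (by omega)))
  have hle : s (n + 1) - B (n + 1) ≤ Real.eulerMascheroniConstant := by
    apply ge_of_tendsto s_tendsto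
    filter_upwards [Filter.eventually_ge_atTop (n + 1)] with m hm
    exact mono (n + 1) m (by omega) hm
  have hstep := s_step n hn
  have hfin : s n - B n < Real.eulerMascheroniConstant := lt_of_lt_of_le hstep hle
  have hB : B n = 1 / (12 * (n : ℝ) ^ 3) + 13 / (120 * (n : ℝ) ^ 4) := rfl
  linarith [hB ▸ hfin]
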